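/- arXiv:2502.19947 — 4 statements merged into one kernel-verified Lean document; each statement's English description precedes it below -/
import Mathlib

section
/- Consider the explicit finite volume scheme h_i (U_i^{n+1} − 2U_i^n + U_i^{n−1})/Δt² − [ℓ_{i+1/2}(U_{i+1}^n − U_i^n) − ℓ_{i−1/2}(U_i^n − U_{i−1}^n)] = rhs_i with Dirichlet conditions U_0^n = U_{Nmax+1}^n = 0, where rhs_i is the Kelvin-Voigt damping term supported on indices N_α+1,…,N_α+N (with rhs_i = (δ/(2Δt h))·(second differences of U^{n+1} − U^{n−1}) as specified). Define the discrete energy E^n = (1/2)∑_{i=1}^{Nmax} h_i((U_i^{n+1} − U_i^n)/Δt)² + (1/2)∑_{i=0}^{Nmax} ℓ_{i+1/2}(U_{i+1}^{n+1} − U_i^{n+1})(U_{i+1}^n − U_i^n). Then E^n − E^{n−1} = −δ Δt h ∑_{i=N_α+1}^{N_α+N−1} ((U_{i+1}^{n+1} − U_i^{n+1} − U_{i+1}^{n−1} + U_i^{n−1})/(2Δt h))². In particular the discrete energy is non-increasing when δ ≥ 0. -/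
open Finset

lemma abel_sum (f W : ℕ → ℝ) (M : ℕ) :
    ∑ i ∈ range (M + 1), f i * (W (i + 1) - W i)
      = f M * W (M + 1) - f 0 * W 0 + ∑ i ∈ Icc 1 M, (f (i - 1) - f i) * W i := by
  induction M with
  | zero => simp; ring
  | succ m ih =>
    rw [Finset.sum_range_succ, ih, Finset.sum_Icc_succ_top (by omega : 1 ≤ m + 1)]
    simp only [Nat.add_sub_cancel]
    ring


/-- The right-hand side (Kelvin-Voigt damping term) of the finite volume scheme,
built from the solution at time levels `n+1` (`Up`) and `n-1` (`Um`). -/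
noncomputable def rhsKV (δ Δt h : ℝ) (Nα N : ℕ) (Up Um : ℕ → ℝ) (i : ℕ) : ℝ :=
  if i = Nα + 1 then
    δ / (2 * Δt) * ((Up (i + 1) - Up i) / h - (Um (i + 1) - Um i) / h)
  else if Nα + 2 ≤ i ∧ i ≤ Nα + N - 1 then
    δ / (2 * Δt) * ((Up (i + 1) - Up i) / h - (Um (i + 1) - Um i) / h
      - (Up i - Up (i - 1)) / h + (Um i - Um (i - 1)) / h)
  else if i = Nα + N then
    -(δ / (2 * Δt)) * ((Up i - Up (i - 1)) / h - (Um i - Um (i - 1)) / h)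
  else 0

/-- Discrete energy of the explicit finite volume scheme, at time level `n`,
built from the solution at time levels `n` (`Un`) and `n+1` (`Unp`). -/
noncomputable def energyExp (Δt : ℝ) (hi ℓ : ℕ → ℝ) (Nmax : ℕ) (Un Unp : ℕ → ℝ) : ℝ :=
  (1 / 2) * ∑ i ∈ Icc 1 Nmax, hi i * ((Unp i - Un i) / Δt) ^ 2 +
    (1 / 2) * ∑ i ∈ range (Nmax + 1),
      ℓ i * (Unp (i + 1) - Unp i) * (Un (i + 1) - Un i)

/-- Dissipation of the discrete energy for the explicit finite volume scheme with
localized Kelvin-Voigt damping: the energy decrement equals the (nonpositive)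
dissipation term, so the discrete energy is non-increasing when `δ ≥ 0`.
`U n i` is the solution at time level `n` and cell `i`; the scheme is stated at
time level `n+1` (relating levels `n+2`, `n+1`, `n`). -/
theorem explicit_scheme_energy_dissipation
    (Nmax Nα N : ℕ) (hNα : 1 ≤ Nα) (hNN : 2 ≤ N) (hsum : Nα + N ≤ Nmax)
    (Δt δ h : ℝ) (hΔt : 0 < Δt) (hδ : 0 ≤ δ) (hh : 0 < h)
    (hi : ℕ → ℝ) (hipos : ∀ i ∈ Icc 1 Nmax, 0 < hi i)
    (ℓ : ℕ → ℝ) (hℓpos : ∀ i ∈ range (Nmax + 1), 0 < ℓ i)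
    (U : ℕ → ℕ → ℝ)
    (hbd : ∀ n, U n 0 = 0 ∧ U n (Nmax + 1) = 0)
    (hscheme : ∀ n, ∀ i ∈ Icc 1 Nmax,
      hi i * (U (n + 2) i - 2 * U (n + 1) i + U n i) / Δt ^ 2 -
        (ℓ i * (U (n + 1) (i + 1) - U (n + 1) i) -
          ℓ (i - 1) * (U (n + 1) i - U (n + 1) (i - 1))) =
        rhsKV δ Δt h Nα N (U (n + 2)) (U n) i) :
    ∀ n,
      energyExp Δt hi ℓ Nmax (U (n + 1)) (U (n + 2)) -
          energyExp Δt hi ℓ Nmax (U n) (U (n + 1)) =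
        -(δ * Δt * h) * ∑ i ∈ Icc (Nα + 1) (Nα + N - 1),
          ((U (n + 2) (i + 1) - U (n + 2) i - U n (i + 1) + U n i) /
              (2 * Δt * h)) ^ 2 ∧
      energyExp Δt hi ℓ Nmax (U (n + 1)) (U (n + 2)) ≤
        energyExp Δt hi ℓ Nmax (U n) (U (n + 1)) := by
  intro n
  have hΔ : Δt ≠ 0 := ne_of_gt hΔt
  have hh0 : h ≠ 0 := ne_of_gt hh
  set W : ℕ → ℝ := fun i => (U (n + 2) i - U n i) / 2 with hWdef
  set f : ℕ → ℝ := fun i => ℓ i * (U (n + 1) (i + 1) - U (n + 1) i) with hfdef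
  have hW0 : W 0 = 0 := by simp [hWdef, (hbd (n + 2)).1, (hbd n).1]
  have hWM : W (Nmax + 1) = 0 := by simp [hWdef, (hbd (n + 2)).2, (hbd n).2]
  have key : energyExp Δt hi ℓ Nmax (U (n + 1)) (U (n + 2)) -
      energyExp Δt hi ℓ Nmax (U n) (U (n + 1)) =
      ∑ i ∈ Icc 1 Nmax, rhsKV δ Δt h Nα N (U (n + 2)) (U n) i * W i := by
    have hsch : ∑ i ∈ Icc 1 Nmax, rhsKV δ Δt h Nα N (U (n + 2)) (U n) i * W i
        = ∑ i ∈ Icc 1 Nmax,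
            (hi i * (U (n + 2) i - 2 * U (n + 1) i + U n i) / Δt ^ 2) * W i
          - ∑ i ∈ Icc 1 Nmax, (f i - f (i - 1)) * W i := by
      rw [← Finset.sum_sub_distrib]
      refine Finset.sum_congr rfl fun i hi' => ?_
      have h1i : i - 1 + 1 = i := by have := Finset.mem_Icc.mp hi'; omega
      rw [← hscheme n i hi']
      simp only [hfdef, h1i]
      ring
    have hkin : ∑ i ∈ Icc 1 Nmax,
        (hi i * (U (n + 2) i - 2 * U (n + 1) i + U n i) / Δt ^ 2) * W i
        = (1 / 2) * ∑ i ∈ Icc 1 Nmax, hi i * ((U (n + 2) i - U (n + 1) i) / Δt) ^ 2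
          - (1 / 2) * ∑ i ∈ Icc 1 Nmax, hi i * ((U (n + 1) i - U n i) / Δt) ^ 2 := by
      rw [Finset.mul_sum, Finset.mul_sum, ← Finset.sum_sub_distrib]
      refine Finset.sum_congr rfl fun i _ => ?_
      simp only [hWdef]
      field_simp
      ring
    have habel := abel_sum f W Nmax
    rw [hW0, hWM] at habel
    have h2pot : ∑ i ∈ Icc 1 Nmax, (f i - f (i - 1)) * W i
        = -∑ i ∈ range (Nmax + 1), f i * (W (i + 1) - W i) := by
      rw [habel]
      simp only [mul_zero, sub_zero, zero_add, ← Finset.sum_neg_distrib]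
      exact Finset.sum_congr rfl fun i _ => by ring
    have hpot : ∑ i ∈ Icc 1 Nmax, (f i - f (i - 1)) * W i
        = (1 / 2) * ∑ i ∈ range (Nmax + 1),
            ℓ i * (U (n + 1) (i + 1) - U (n + 1) i) * (U n (i + 1) - U n i)
          - (1 / 2) * ∑ i ∈ range (Nmax + 1),
            ℓ i * (U (n + 2) (i + 1) - U (n + 2) i) * (U (n + 1) (i + 1) - U (n + 1) i) := by
      rw [h2pot, Finset.mul_sum, Finset.mul_sum, ← Finset.sum_sub_distrib,
        ← Finset.sum_neg_distrib]
      refine Finset.sum_congr rfl fun i _ => ?_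
      simp only [hfdef, hWdef]
      ring
    rw [hsch, hkin, hpot]
    simp only [energyExp]
    ring
  set g : ℕ → ℝ := fun i =>
    if Nα + 1 ≤ i ∧ i ≤ Nα + N - 1 then
      δ / (2 * Δt) * ((U (n + 2) (i + 1) - U (n + 2) i) / h - (U n (i + 1) - U n i) / h)
    else 0 with hgdef
  have hrhsg : ∀ i ∈ Icc 1 Nmax, rhsKV δ Δt h Nα N (U (n + 2)) (U n) i = g i - g (i - 1) := by
    intro i hi'
    simp only [Finset.mem_Icc] at hi'
    have h1i : i - 1 + 1 = i := by omega
    simp only [hgdef, rhsKV, h1i]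
    split_ifs <;> first | (exfalso; omega) | ring
  have key2 : ∑ i ∈ Icc 1 Nmax, rhsKV δ Δt h Nα N (U (n + 2)) (U n) i * W i
      = -(δ * Δt * h) * ∑ i ∈ Icc (Nα + 1) (Nα + N - 1),
          ((U (n + 2) (i + 1) - U (n + 2) i - U n (i + 1) + U n i) / (2 * Δt * h)) ^ 2 := by
    have h1 : ∑ i ∈ Icc 1 Nmax, rhsKV δ Δt h Nα N (U (n + 2)) (U n) i * W i
        = ∑ i ∈ Icc 1 Nmax, (g i - g (i - 1)) * W i :=
      Finset.sum_congr rfl fun i hi' => by rw [hrhsg i hi']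
    have habel := abel_sum g W Nmax
    rw [hW0, hWM] at habel
    have h2 : ∑ i ∈ Icc 1 Nmax, (g i - g (i - 1)) * W i
        = -∑ i ∈ range (Nmax + 1), g i * (W (i + 1) - W i) := by
      rw [habel]
      simp only [mul_zero, sub_zero, zero_add, ← Finset.sum_neg_distrib]
      exact Finset.sum_congr rfl fun i _ => by ring
    have h3 : ∑ i ∈ range (Nmax + 1), g i * (W (i + 1) - W i)
        = ∑ i ∈ Icc (Nα + 1) (Nα + N - 1), g i * (W (i + 1) - W i) := by
      symm
      apply Finset.sum_subset
      · intro x hx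
        simp only [Finset.mem_Icc] at hx
        simp only [Finset.mem_range]
        omega
      · intro x _ hx
        simp only [Finset.mem_Icc] at hx
        have hg : g x = 0 := by simp only [hgdef]; exact if_neg hx
        rw [hg, zero_mul]
    have h4 : ∑ i ∈ Icc (Nα + 1) (Nα + N - 1), g i * (W (i + 1) - W i)
        = (δ * Δt * h) * ∑ i ∈ Icc (Nα + 1) (Nα + N - 1),
            ((U (n + 2) (i + 1) - U (n + 2) i - U n (i + 1) + U n i) / (2 * Δt * h)) ^ 2 := by
      rw [Finset.mul_sum]
      refine Finset.sum_congr rfl fun i hi' => ?_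
      simp only [Finset.mem_Icc] at hi'
      have hg : g i = δ / (2 * Δt) *
          ((U (n + 2) (i + 1) - U (n + 2) i) / h - (U n (i + 1) - U n i) / h) := by
        simp only [hgdef]; exact if_pos hi'
      rw [hg]
      simp only [hWdef]
      field_simp
      ring
    rw [h1, h2, h3, h4]
    ring
  have hE := key.trans key2
  refine ⟨hE, ?_⟩
  have hsq : 0 ≤ ∑ i ∈ Icc (Nα + 1) (Nα + N - 1),
      ((U (n + 2) (i + 1) - U (n + 2) i - U n (i + 1) + U n i) / (2 * Δt * h)) ^ 2 :=
    Finset.sum_nonneg fun i _ => sq_nonneg _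
  have hpos : 0 ≤ δ * Δt * h * ∑ i ∈ Icc (Nα + 1) (Nα + N - 1),
      ((U (n + 2) (i + 1) - U (n + 2) i - U n (i + 1) + U n i) / (2 * Δt * h)) ^ 2 :=
    mul_nonneg (by positivity) hsq
  linarith
end

section
/- With the same mesh and damping setup, consider the semi-implicit scheme h_i (U_i^{n+1} − 2U_i^n + U_i^{n−1})/Δt² − (1/2)[ℓ_{i+1/2}(U_{i+1}^{n+1} − U_i^{n+1}) − ℓ_{i−1/2}(U_i^{n+1} − U_{i−1}^{n+1})] − (1/2)[ℓ_{i+1/2}(U_{i+1}^{n−1} − U_i^{n−1}) − ℓ_{i−1/2}(U_i^{n−1} − U_{i−1}^{n−1})] = rhs_i. Define E^n = (1/2)∑_i h_i((U_i^{n+1} − U_i^n)/Δt)² + (1/4)∑_{i=0}^{Nmax} ℓ_{i+1/2}(U_{i+1}^{n+1} − U_i^{n+1})² + (1/4)∑_{i=0}^{Nmax} ℓ_{i+1/2}(U_{i+1}^n − U_i^n)². Then E^n − E^{n−1} = −δ Δt h ∑_{i=N_α+1}^{N_α+N−1} ((U_{i+1}^{n+1} − U_i^{n+1} − U_{i+1}^{n−1}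 + U_i^{n−1})/(2Δt h))² ≤ 0. -/
open Finset

/-- Discrete energy of the semi-implicit finite volume scheme, at time level `n`,
built from the solution at time levels `n` (`Un`) and `n+1` (`Unp`). -/
noncomputable def energyImp (Δt : ℝ) (hi ℓ : ℕ → ℝ) (Nmax : ℕ) (Un Unp : ℕ → ℝ) : ℝ :=
  (1 / 2) * ∑ i ∈ Icc 1 Nmax, hi i * ((Unp i - Un i) / Δt) ^ 2 +
    (1 / 4) * ∑ i ∈ range (Nmax + 1), ℓ i * (Unp (i + 1) - Unp i) ^ 2 +
    (1 / 4) * ∑ i ∈ range (Nmax + 1), ℓ i * (Un (i + 1) - Un i) ^ 2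

/-- Auxiliary discrete gradient used to rewrite `rhsKV` as a discrete divergence. -/
noncomputable def gaux (h : ℝ) (Nα N : ℕ) (Up Um : ℕ → ℝ) (i : ℕ) : ℝ :=
  if Nα + 1 ≤ i ∧ i ≤ Nα + N - 1 then
    ((Up (i + 1) - Up i) - (Um (i + 1) - Um i)) / h else 0

/-- Summation by parts with homogeneous Dirichlet boundary conditions. -/
lemma sbp (M : ℕ) (W a : ℕ → ℝ) (h0 : W 0 = 0) (h1 : W (M + 1) = 0) :
    ∑ i ∈ Icc 1 M, W i * (a i - a (i - 1)) =
      -∑ i ∈ range (M + 1), (W (i + 1) - W i) * a i := by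
  have e1 : ∑ i ∈ Icc 1 M, W i * (a i - a (i - 1))
      = ∑ i ∈ range M, W (i + 1) * (a (i + 1) - a i) := by
    rw [← Finset.Ico_add_one_right_eq_Icc, Finset.sum_Ico_eq_sum_range]
    refine Finset.sum_congr (by norm_num) fun i _ => ?_
    have h2 : 1 + i = i + 1 := by omega
    rw [h2]
    norm_num
  have e2 : ∑ i ∈ range M, W (i + 1) * a (i + 1) = ∑ i ∈ range (M + 1), W i * a i := by
    rw [Finset.sum_range_succ' (fun i => W i * a i) M]
    simp [h0]
  have e3 : ∑ i ∈ range (M + 1), W (i + 1) * a i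
      = ∑ i ∈ range M, W (i + 1) * a i := by
    rw [Finset.sum_range_succ]
    simp [h1]
  have e4 : ∑ i ∈ range M, W (i + 1) * (a (i + 1) - a i)
      = ∑ i ∈ range M, W (i + 1) * a (i + 1) - ∑ i ∈ range M, W (i + 1) * a i := by
    rw [← Finset.sum_sub_distrib]
    exact Finset.sum_congr rfl fun i _ => by ring
  have e5 : -∑ i ∈ range (M + 1), (W (i + 1) - W i) * a i
      = ∑ i ∈ range (M + 1), W i * a i - ∑ i ∈ range (M + 1), W (i + 1) * a i := by
    rw [← Finset.sum_sub_distrib, ← Finset.sum_neg_distrib]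
    exact Finset.sum_congr rfl fun i _ => by ring
  linarith [e1, e2, e3, e4, e5]

/-- The damping term is a discrete divergence of the auxiliary gradient. -/
lemma rhs_eq (δ Δt h : ℝ) (Nα N : ℕ) (hN : 2 ≤ N) (Up Um : ℕ → ℝ) (i : ℕ) :
    rhsKV δ Δt h Nα N Up Um i =
      δ / (2 * Δt) * (gaux h Nα N Up Um i - gaux h Nα N Up Um (i - 1)) := by
  rcases Nat.eq_zero_or_pos i with hi0 | hip
  · subst hi0
    unfold rhsKV gaux
    split_ifs <;> first | omega | ring1 | exact (by assumption : False).elim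
  · obtain ⟨j, rfl⟩ := Nat.exists_eq_add_of_le' hip
    unfold rhsKV gaux
    simp only [Nat.add_sub_cancel_left, Nat.add_sub_cancel]
    split_ifs <;> first | omega | ring1 | exact (by assumption : False).elim

/-- Dissipation of the discrete energy for the semi-implicit finite volume scheme
with localized Kelvin-Voigt damping: the energy decrement equals the nonpositive
dissipation term, so the energy is non-increasing.  The scheme is stated at time
level `n+1` (relating levels `n+2`, `n+1`, `n`). -/
theorem implicit_scheme_energy_dissipation
    (Nmax Nα N : ℕ) (hNα : 1 ≤ Nα) (hNN : 2 ≤ N) (hsum : Nα + N ≤ Nmax)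
    (Δt δ h : ℝ) (hΔt : 0 < Δt) (hδ : 0 ≤ δ) (hh : 0 < h)
    (hi : ℕ → ℝ) (hipos : ∀ i ∈ Icc 1 Nmax, 0 < hi i)
    (ℓ : ℕ → ℝ) (hℓpos : ∀ i ∈ range (Nmax + 1), 0 < ℓ i)
    (U : ℕ → ℕ → ℝ)
    (hbd : ∀ n, U n 0 = 0 ∧ U n (Nmax + 1) = 0)
    (hscheme : ∀ n, ∀ i ∈ Icc 1 Nmax,
      hi i * (U (n + 2) i - 2 * U (n + 1) i + U n i) / Δt ^ 2 -
        (1 / 2) * (ℓ i * (U (n + 2) (i + 1) - U (n + 2) i) -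
          ℓ (i - 1) * (U (n + 2) i - U (n + 2) (i - 1))) -
        (1 / 2) * (ℓ i * (U n (i + 1) - U n i) -
          ℓ (i - 1) * (U n i - U n (i - 1))) =
        rhsKV δ Δt h Nα N (U (n + 2)) (U n) i) :
    ∀ n,
      energyImp Δt hi ℓ Nmax (U (n + 1)) (U (n + 2)) -
          energyImp Δt hi ℓ Nmax (U n) (U (n + 1)) =
        -(δ * Δt * h) * ∑ i ∈ Icc (Nα + 1) (Nα + N - 1),
          ((U (n + 2) (i + 1) - U (n + 2) i - U n (i + 1) + U n i) /
              (2 * Δt * h)) ^ 2 ∧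
      energyImp Δt hi ℓ Nmax (U (n + 1)) (U (n + 2)) ≤
        energyImp Δt hi ℓ Nmax (U n) (U (n + 1)) := by
  intro n
  have hΔ : Δt ≠ 0 := ne_of_gt hΔt
  have hh0 : h ≠ 0 := ne_of_gt hh
  have hb0 : (fun i => U (n + 2) i - U n i) 0 = 0 := by
    simp [(hbd (n + 2)).1, (hbd n).1]
  have hb1 : (fun i => U (n + 2) i - U n i) (Nmax + 1) = 0 := by
    simp [(hbd (n + 2)).2, (hbd n).2]
  have SBPC := sbp Nmax (fun i => U (n + 2) i - U n i)
      (fun j => ℓ j * (U (n + 2) (j + 1) - U (n + 2) j)) hb0 hb1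
  have SBPA := sbp Nmax (fun i => U (n + 2) i - U n i)
      (fun j => ℓ j * (U n (j + 1) - U n j)) hb0 hb1
  have SBPg := sbp Nmax (fun i => U (n + 2) i - U n i)
      (gaux h Nα N (U (n + 2)) (U n)) hb0 hb1
  beta_reduce at SBPC SBPA SBPg
  have hT : ∑ i ∈ Icc 1 Nmax, (U (n + 2) i - U n i) *
        (hi i * (U (n + 2) i - 2 * U (n + 1) i + U n i) / Δt ^ 2)
      = (1 / 2) * ∑ i ∈ Icc 1 Nmax, (U (n + 2) i - U n i) *
          (ℓ i * (U (n + 2) (i + 1) - U (n + 2) i) -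
            ℓ (i - 1) * (U (n + 2) (i - 1 + 1) - U (n + 2) (i - 1)))
        + (1 / 2) * ∑ i ∈ Icc 1 Nmax, (U (n + 2) i - U n i) *
          (ℓ i * (U n (i + 1) - U n i) -
            ℓ (i - 1) * (U n (i - 1 + 1) - U n (i - 1)))
        + ∑ i ∈ Icc 1 Nmax, (U (n + 2) i - U n i) *
            rhsKV δ Δt h Nα N (U (n + 2)) (U n) i := by
    rw [Finset.mul_sum, Finset.mul_sum, ← Finset.sum_add_distrib, ← Finset.sum_add_distrib]
    refine Finset.sum_congr rfl fun i hmem => ?_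
    have h1i : 1 ≤ i := (Finset.mem_Icc.mp hmem).1
    have e := hscheme n i hmem
    rw [show i - 1 + 1 = i from by omega]
    linear_combination (U (n + 2) i - U n i) * e
  have hK : ∑ i ∈ Icc 1 Nmax, hi i * ((U (n + 2) i - U (n + 1) i) / Δt) ^ 2
        - ∑ i ∈ Icc 1 Nmax, hi i * ((U (n + 1) i - U n i) / Δt) ^ 2
      = ∑ i ∈ Icc 1 Nmax, (U (n + 2) i - U n i) *
          (hi i * (U (n + 2) i - 2 * U (n + 1) i + U n i) / Δt ^ 2) := by
    rw [← Finset.sum_sub_distrib]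
    refine Finset.sum_congr rfl fun i _ => ?_
    field_simp
    ring
  have hP : ∑ i ∈ range (Nmax + 1),
        (U (n + 2) (i + 1) - U n (i + 1) - (U (n + 2) i - U n i)) *
          (ℓ i * (U (n + 2) (i + 1) - U (n + 2) i))
        + ∑ i ∈ range (Nmax + 1),
        (U (n + 2) (i + 1) - U n (i + 1) - (U (n + 2) i - U n i)) *
          (ℓ i * (U n (i + 1) - U n i))
      = ∑ i ∈ range (Nmax + 1), ℓ i * (U (n + 2) (i + 1) - U (n + 2) i) ^ 2
        - ∑ i ∈ range (Nmax + 1), ℓ i * (U n (i + 1) - U n i) ^ 2 := by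
    rw [← Finset.sum_add_distrib, ← Finset.sum_sub_distrib]
    exact Finset.sum_congr rfl fun i _ => by ring
  have hR : ∑ i ∈ Icc 1 Nmax, (U (n + 2) i - U n i) *
        rhsKV δ Δt h Nα N (U (n + 2)) (U n) i
      = δ / (2 * Δt) * ∑ i ∈ Icc 1 Nmax, (U (n + 2) i - U n i) *
          (gaux h Nα N (U (n + 2)) (U n) i - gaux h Nα N (U (n + 2)) (U n) (i - 1)) := by
    rw [Finset.mul_sum]
    refine Finset.sum_congr rfl fun i _ => ?_
    rw [rhs_eq δ Δt h Nα N hNN (U (n + 2)) (U n) i]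
    ring
  have hsubS : Icc (Nα + 1) (Nα + N - 1) ⊆ range (Nmax + 1) := by
    intro x hx
    simp only [Finset.mem_Icc] at hx
    simp only [Finset.mem_range]
    omega
  have hz : ∀ x ∈ range (Nmax + 1), x ∉ Icc (Nα + 1) (Nα + N - 1) →
      (U (n + 2) (x + 1) - U n (x + 1) - (U (n + 2) x - U n x)) *
        gaux h Nα N (U (n + 2)) (U n) x = 0 := by
    intro x _ hxs
    have hc : ¬(Nα + 1 ≤ x ∧ x ≤ Nα + N - 1) := by
      simpa [Finset.mem_Icc] using hxs
    unfold gaux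
    rw [if_neg hc, mul_zero]
  have R4 : ∑ i ∈ range (Nmax + 1),
        (U (n + 2) (i + 1) - U n (i + 1) - (U (n + 2) i - U n i)) *
          gaux h Nα N (U (n + 2)) (U n) i
      = ∑ i ∈ Icc (Nα + 1) (Nα + N - 1),
        (U (n + 2) (i + 1) - U n (i + 1) - (U (n + 2) i - U n i)) *
          ((U (n + 2) (i + 1) - U (n + 2) i - (U n (i + 1) - U n i)) / h) := by
    rw [← Finset.sum_subset hsubS hz]
    refine Finset.sum_congr rfl fun i hi' => ?_
    unfold gaux
    rw [if_pos (Finset.mem_Icc.mp hi')]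
  have hcong : ∑ i ∈ Icc (Nα + 1) (Nα + N - 1),
        ((U (n + 2) (i + 1) - U (n + 2) i - U n (i + 1) + U n i) / (2 * Δt * h)) ^ 2
      = (∑ i ∈ Icc (Nα + 1) (Nα + N - 1),
          (U (n + 2) (i + 1) - U n (i + 1) - (U (n + 2) i - U n i)) *
            ((U (n + 2) (i + 1) - U (n + 2) i - (U n (i + 1) - U n i)) / h))
          * (1 / (4 * Δt ^ 2 * h)) := by
    rw [Finset.sum_mul]
    refine Finset.sum_congr rfl fun i _ => ?_
    field_simp
    ring
  have hmain : energyImp Δt hi ℓ Nmax (U (n + 1)) (U (n + 2)) -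
        energyImp Δt hi ℓ Nmax (U n) (U (n + 1))
      = (1 / 2) * ∑ i ∈ Icc 1 Nmax, (U (n + 2) i - U n i) *
          rhsKV δ Δt h Nα N (U (n + 2)) (U n) i := by
    unfold energyImp
    linear_combination (1 / 2) * hK + (1 / 2) * hT + (1 / 4) * SBPC + (1 / 4) * SBPA
      - (1 / 4) * hP
  have hfirst : energyImp Δt hi ℓ Nmax (U (n + 1)) (U (n + 2)) -
        energyImp Δt hi ℓ Nmax (U n) (U (n + 1))
      = -(δ * Δt * h) * ∑ i ∈ Icc (Nα + 1) (Nα + N - 1),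
          ((U (n + 2) (i + 1) - U (n + 2) i - U n (i + 1) + U n i) /
              (2 * Δt * h)) ^ 2 := by
    rw [hmain, hR, SBPg, R4, hcong]
    field_simp
    ring
  refine ⟨hfirst, ?_⟩
  have hSnn : 0 ≤ ∑ i ∈ Icc (Nα + 1) (Nα + N - 1),
      ((U (n + 2) (i + 1) - U (n + 2) i - U n (i + 1) + U n i) /
          (2 * Δt * h)) ^ 2 :=
    Finset.sum_nonneg fun i _ => sq_nonneg _
  nlinarith [hfirst, hSnn, mul_nonneg (mul_nonneg hδ hΔt.le) hh.le]
end

section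
/- Let U ∈ H¹(0, L) with U(0) = U(L) = 0, and let the interval (0,L) be partitioned into Nmax cells of uniform width h with cell averages U_i = (1/h) ∫_{K_i} U(x) dx, setting U_0 = U_{Nmax+1} = 0. Then ∑_{i=0}^{Nmax} (U_{i+1} − U_i)²/h ≤ ∫_0^L (U'(x))² dx. -/
open Finset

open MeasureTheory intervalIntegral in
/-- Cauchy–Schwarz for interval integrals. -/
lemma sq_intervalIntegral_le_aux (a b : ℝ) (hab : a ≤ b) (f : ℝ → ℝ)
    (hf : IntervalIntegrable f volume a b)
    (hf2 : IntervalIntegrable (fun x => f x ^ 2) volume a b) :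
    (∫ x in a..b, f x) ^ 2 ≤ (b - a) * ∫ x in a..b, f x ^ 2 := by
  rcases eq_or_lt_of_le hab with rfl | hlt
  · simp
  set I := ∫ x in a..b, f x with hI
  set J := ∫ x in a..b, f x ^ 2 with hJ
  have h0 : 0 ≤ ∫ x in a..b, ((b - a) * f x - I) ^ 2 :=
    intervalIntegral.integral_nonneg hab (fun x _ => sq_nonneg _)
  have hexp : ∫ x in a..b, ((b - a) * f x - I) ^ 2
      = (b - a) ^ 2 * J - 2 * (b - a) * I * I + I ^ 2 * (b - a) := by
    have hptw : ∀ x, ((b - a) * f x - I) ^ 2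
        = ((b - a) ^ 2 * f x ^ 2 - (2 * (b - a) * I) * f x) + I ^ 2 := by
      intro x; ring
    simp_rw [hptw]
    rw [intervalIntegral.integral_add ((hf2.const_mul _).sub (hf.const_mul _))
        intervalIntegrable_const,
      intervalIntegral.integral_sub (hf2.const_mul _) (hf.const_mul _),
      intervalIntegral.integral_const_mul, intervalIntegral.integral_const_mul,
      intervalIntegral.integral_const, ← hI, ← hJ]
    simp only [smul_eq_mul]
    ring_nf
  rw [hexp] at h0
  have hba : 0 < b - a := sub_pos.mpr hlt
  nlinarith [mul_pos hba hba]

open MeasureTheory intervalIntegral in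
/-- Discrete H¹ semi-norm estimate for the cell-average projection on a uniform
mesh: the sum of squared differences of consecutive cell averages divided by the
mesh size is bounded by the L² norm of the derivative.  `Ua i` is the average of
`U` over the cell `K_i = ((i-1)h, ih)` and `Ua 0 = Ua (Nmax+1) = 0`. -/
theorem discrete_H1_seminorm_estimate
    (L : ℝ) (hL : 0 < L) (Nmax : ℕ) (hNmax : 1 ≤ Nmax)
    (h : ℝ) (hh : h = L / Nmax)
    (U U' : ℝ → ℝ)
    (hderiv : ∀ t ∈ Set.Icc (0 : ℝ) L, HasDerivAt U (U' t) t)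
    (hU'2 : MeasureTheory.IntegrableOn (fun t => (U' t) ^ 2) (Set.Ioc 0 L))
    (hU0 : U 0 = 0) (hUL : U L = 0)
    (Ua : ℕ → ℝ) (hUa0 : Ua 0 = 0) (hUaN : Ua (Nmax + 1) = 0)
    (hUa : ∀ i ∈ Icc 1 Nmax,
      Ua i = (1 / h) * ∫ t in ((i - 1 : ℕ) * h)..(i * h), U t) :
    ∑ i ∈ range (Nmax + 1), (Ua (i + 1) - Ua i) ^ 2 / h ≤
      ∫ t in (0 : ℝ)..L, (U' t) ^ 2 := by
  have hN0 : (0:ℝ) < (Nmax:ℝ) := by exact_mod_cast Nat.pos_of_ne_zero (by omega)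
  have hh0 : 0 < h := by rw [hh]; positivity
  have hNh : (Nmax : ℝ) * h = L := by rw [hh]; field_simp
  -- extended derivative and its square
  set g : ℝ → ℝ := Set.indicator (Set.Ioc 0 L) U' with hgdef
  set V : ℝ → ℝ := Set.indicator (Set.Ioc 0 L) (fun t => U' t ^ 2) with hVdef
  have hgV : ∀ t, g t ^ 2 = V t := by
    intro t
    by_cases ht : t ∈ Set.Ioc 0 L <;>
      simp [hgdef, hVdef, Set.indicator_of_mem, Set.indicator_of_notMem, ht]
  -- measurability and integrability of U'
  have hU'eq : ∀ t ∈ Set.Icc (0:ℝ) L, U' t = deriv U t :=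
    fun t ht => ((hderiv t ht).deriv).symm
  have hmeas : AEStronglyMeasurable U' (volume.restrict (Set.Ioc 0 L)) := by
    refine (measurable_deriv U).aestronglyMeasurable.congr ?_
    filter_upwards [ae_restrict_mem measurableSet_Ioc] with t ht
    exact (hU'eq t ⟨le_of_lt ht.1, ht.2⟩).symm
  have hU'int : IntegrableOn U' (Set.Ioc 0 L) := by
    refine Integrable.mono' ((integrable_const (1:ℝ)).add hU'2) hmeas ?_
    · filter_upwards with t
      have := sq_nonneg (|U' t| - 1)
      have h2 := sq_abs (U' t)
      simp only [Real.norm_eq_abs, Pi.add_apply]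
      nlinarith
  have hg_int : MeasureTheory.Integrable g :=
    (integrable_indicator_iff measurableSet_Ioc).mpr hU'int
  have hV_int : MeasureTheory.Integrable V :=
    (integrable_indicator_iff measurableSet_Ioc).mpr hU'2
  -- primitives
  set F : ℝ → ℝ := fun x => ∫ t in (0:ℝ)..x, g t with hFdef
  set W : ℝ → ℝ := fun x => ∫ t in (0:ℝ)..x, V t with hWdef
  have hFsub : ∀ a b : ℝ, F b - F a = ∫ t in a..b, g t := fun a b =>
    integral_interval_sub_left hg_int.intervalIntegrable hg_int.intervalIntegrable
  have hWsub : ∀ a b : ℝ, W b - W a = ∫ t in a..b, V t := fun a b =>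
    integral_interval_sub_left hV_int.intervalIntegrable hV_int.intervalIntegrable
  have hFcont : Continuous F :=
    intervalIntegral.continuous_primitive (fun a b => hg_int.intervalIntegrable) 0
  have hWcont : Continuous W :=
    intervalIntegral.continuous_primitive (fun a b => hV_int.intervalIntegrable) 0
  -- F agrees with U on [0, L]
  have hFU : ∀ x ∈ Set.Icc (0:ℝ) L, F x = U x := by
    intro x hx
    have h1 : F x = ∫ t in (0:ℝ)..x, U' t := by
      simp only [hFdef]
      rw [intervalIntegral.integral_of_le hx.1, intervalIntegral.integral_of_le hx.1]
      refine setIntegral_congr_fun measurableSet_Ioc (fun t ht => ?_)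
      have ht' : t ∈ Set.Ioc 0 L := ⟨ht.1, ht.2.trans hx.2⟩
      exact Set.indicator_of_mem ht' U'
    rw [h1, intervalIntegral.integral_eq_sub_of_hasDerivAt
      (fun t ht => hderiv t (by
        rw [Set.uIcc_of_le hx.1] at ht
        exact ⟨ht.1, ht.2.trans hx.2⟩))
      (by
        rw [intervalIntegrable_iff_integrableOn_Ioc_of_le hx.1]
        exact hU'int.mono_set (Set.Ioc_subset_Ioc_right hx.2)),
      hU0, sub_zero]
  -- F vanishes off [0, L]
  have hFneg : ∀ x ≤ (0:ℝ), F x = 0 := by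
    intro x hx
    have : (0:ℝ) - F x = ∫ t in x..(0:ℝ), g t := by
      have := hFsub x 0
      simpa [hFdef] using this
    have hz : (∫ t in x..(0:ℝ), g t) = 0 := by
      rw [intervalIntegral.integral_of_le hx]
      refine (setIntegral_congr_fun measurableSet_Ioc (g := fun _ => (0:ℝ))
        (fun t ht => ?_)).trans (by simp)
      exact Set.indicator_of_notMem (fun hmem => absurd (hmem.1.trans_le ht.2) (lt_irrefl 0)) U'
    linarith [this, hz]
  have hFge : ∀ x, L ≤ x → F x = 0 := by
    intro x hx
    have h1 : F x - F L = ∫ t in L..x, g t := hFsub L x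
    have hz : (∫ t in L..x, g t) = 0 := by
      rw [intervalIntegral.integral_of_le hx]
      refine (setIntegral_congr_fun measurableSet_Ioc (g := fun _ => (0:ℝ))
        (fun t ht => ?_)).trans (by simp)
      exact Set.indicator_of_notMem (fun hmem => absurd (ht.1.trans_le hmem.2) (lt_irrefl L)) U'
    have hFL : F L = 0 := by
      rw [hFU L ⟨le_of_lt hL, le_refl L⟩, hUL]
    linarith
  -- W vanishes for x ≤ 0 and is constant for x ≥ L
  have hWneg : ∀ x ≤ (0:ℝ), W x = 0 := by
    intro x hx
    have h1 : W 0 - W x = ∫ t in x..(0:ℝ), V t := hWsub x 0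
    have hz : (∫ t in x..(0:ℝ), V t) = 0 := by
      rw [intervalIntegral.integral_of_le hx]
      refine (setIntegral_congr_fun measurableSet_Ioc (g := fun _ => (0:ℝ))
        (fun t ht => ?_)).trans (by simp)
      exact Set.indicator_of_notMem
        (fun hmem => absurd (hmem.1.trans_le ht.2) (lt_irrefl 0)) _
    have hW0 : W 0 = 0 := by simp [hWdef]
    linarith
  have hWge : ∀ x, L ≤ x → W x = W L := by
    intro x hx
    have h1 : W x - W L = ∫ t in L..x, V t := hWsub L x
    have hz : (∫ t in L..x, V t) = 0 := by
      rw [intervalIntegral.integral_of_le hx]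
      refine (setIntegral_congr_fun measurableSet_Ioc (g := fun _ => (0:ℝ))
        (fun t ht => ?_)).trans (by simp)
      exact Set.indicator_of_notMem (fun hmem => absurd (ht.1.trans_le hmem.2) (lt_irrefl L)) _
    linarith
  have hWL : W L = ∫ t in (0:ℝ)..L, U' t ^ 2 := by
    simp only [hWdef]
    rw [intervalIntegral.integral_of_le hL.le, intervalIntegral.integral_of_le hL.le]
    refine setIntegral_congr_fun measurableSet_Ioc (fun t ht => ?_)
    exact Set.indicator_of_mem ht _
  -- cell endpoints
  set c : ℕ → ℝ := fun i => (i:ℝ) * h - h with hcdef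
  have hcmono : ∀ i : ℕ, c i ≤ c (i + 1) := by
    intro i; simp only [hcdef]; push_cast; nlinarith
  have hcsucc : ∀ i : ℕ, c (i + 1) = c i + h := by
    intro i; simp only [hcdef]; push_cast; ring
  -- cell-average formula in terms of F
  have hAv : ∀ i ≤ Nmax + 1, Ua i = (1 / h) * ∫ x in (c i)..(c (i+1)), F x := by
    intro i hi
    rcases Nat.eq_zero_or_pos i with rfl | hi1
    · have hz : (∫ x in (c 0)..(c 1), F x) = 0 := by
        have heq : Set.EqOn F (fun _ => (0:ℝ)) (Set.uIcc (c 0) (c 1)) := by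
          intro x hx
          rw [Set.uIcc_of_le (hcmono 0)] at hx
          exact hFneg x (le_trans hx.2 (by simp [hcdef]))
        rw [intervalIntegral.integral_congr heq]; simp
      rw [hUa0, hz]; ring
    rcases Nat.lt_or_ge i (Nmax + 1) with hlt | hge
    · have him : i ∈ Icc 1 Nmax := mem_Icc.mpr ⟨hi1, Nat.lt_succ_iff.mp hlt⟩
      rw [hUa i him]
      congr 1
      have hc1 : ((i - 1 : ℕ) : ℝ) * h = c i := by
        simp only [hcdef]
        rw [Nat.cast_sub hi1]; push_cast; ring
      have hc2 : (i:ℝ) * h = c (i + 1) := by simp only [hcdef]; push_cast; ring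
      rw [hc1, hc2]
      refine intervalIntegral.integral_congr (fun x hx => ?_) |>.symm
      rw [Set.uIcc_of_le (hcmono i)] at hx
      refine hFU x ⟨?_, ?_⟩
      · refine le_trans ?_ hx.1
        simp only [hcdef]
        have : (1:ℝ) ≤ (i:ℝ) := by exact_mod_cast hi1
        nlinarith
      · refine le_trans hx.2 ?_
        have hiNm : (i:ℝ) ≤ (Nmax:ℝ) := by exact_mod_cast (mem_Icc.mp him).2
        calc c (i+1) = ((i:ℝ)) * h := by simp only [hcdef]; push_cast; ring
          _ ≤ (Nmax:ℝ) * h := by nlinarith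
          _ = L := hNh
    · have hieq : i = Nmax + 1 := le_antisymm hi hge
      subst hieq
      have hz : (∫ x in (c (Nmax+1))..(c (Nmax+2)), F x) = 0 := by
        have heq : Set.EqOn F (fun _ => (0:ℝ)) (Set.uIcc (c (Nmax+1)) (c (Nmax+2))) := by
          intro x hx
          rw [Set.uIcc_of_le (hcmono (Nmax+1))] at hx
          refine hFge x (le_trans ?_ hx.1)
          simp only [hcdef]; push_cast
          nlinarith
        rw [intervalIntegral.integral_congr heq]; simp
      rw [hUaN, hz]; ring
  -- the key per-cell estimate
  have hFh : Continuous (fun x => F (x + h)) := hFcont.comp (continuous_add_right h)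
  have hWh : Continuous (fun x => W (x + h)) := hWcont.comp (continuous_add_right h)
  set φ : ℝ → ℝ := fun x => W (x + h) - W x with hφdef
  have hφcont : Continuous φ := hWh.sub hWcont
  have hkey : ∀ i ∈ range (Nmax + 1),
      (Ua (i + 1) - Ua i) ^ 2 / h ≤ (1 / h) * ∫ x in (c i)..(c (i+1)), φ x := by
    intro i hi
    have hiN : i ≤ Nmax := Nat.lt_succ_iff.mp (mem_range.mp hi)
    have hUdiff : Ua (i + 1) - Ua i
        = (1 / h) * ∫ x in (c i)..(c (i+1)), (F (x + h) - F x) := by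
      have e1 : (∫ x in (c (i+1))..(c (i+1+1)), F x)
          = ∫ x in (c i)..(c (i+1)), F (x + h) := by
        rw [intervalIntegral.integral_comp_add_right (fun x => F x) h,
          ← hcsucc i, ← hcsucc (i+1)]
      rw [hAv i (le_trans hiN (Nat.le_succ _)), hAv (i+1) (by omega), e1, ← mul_sub,
        ← intervalIntegral.integral_sub (hFh.intervalIntegrable _ _)
          (hFcont.intervalIntegrable _ _)]
    set D : ℝ → ℝ := fun x => F (x + h) - F x with hDdef
    have hDcont : Continuous D := hFh.sub hFcont
    -- pointwise bound D x ^ 2 ≤ h * φ x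
    have hDptw : ∀ x, D x ^ 2 ≤ h * φ x := by
      intro x
      have hDx : D x = ∫ t in x..(x+h), g t := hFsub x (x + h)
      have hφx : φ x = ∫ t in x..(x+h), V t := hWsub x (x + h)
      have hg2_int : MeasureTheory.Integrable (fun t => g t ^ 2) := by
        have : (fun t => g t ^ 2) = V := funext hgV
        rw [this]; exact hV_int
      have hcs := sq_intervalIntegral_le_aux x (x+h) (by linarith) g
        hg_int.intervalIntegrable hg2_int.intervalIntegrable
      have hVg : (∫ t in x..(x+h), g t ^ 2) = ∫ t in x..(x+h), V t := by
        refine intervalIntegral.integral_congr (fun t _ => hgV t)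
      rw [hDx, hφx, ← hVg]
      simpa using hcs
    -- Cauchy–Schwarz for the average
    have hcs1 := sq_intervalIntegral_le_aux (c i) (c (i+1)) (hcmono i) D
      (hDcont.intervalIntegrable _ _) ((hDcont.pow 2).intervalIntegrable _ _)
    have hlen : c (i+1) - c i = h := by rw [hcsucc i]; ring
    rw [hlen] at hcs1
    have hmono2 : (∫ x in (c i)..(c (i+1)), D x ^ 2)
        ≤ ∫ x in (c i)..(c (i+1)), h * φ x := by
      refine intervalIntegral.integral_mono_on (hcmono i)
        ((hDcont.pow 2).intervalIntegrable _ _)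
        ((continuous_const.mul hφcont).intervalIntegrable _ _) (fun x _ => hDptw x)
    rw [intervalIntegral.integral_const_mul] at hmono2
    rw [hUdiff]
    set A := ∫ x in (c i)..(c (i+1)), D x with hAdef
    set B := ∫ x in (c i)..(c (i+1)), φ x with hBdef
    have hA2 : A ^ 2 ≤ h * (h * B) :=
      le_trans hcs1 (mul_le_mul_of_nonneg_left hmono2 hh0.le)
    have : ((1/h) * A) ^ 2 / h = A ^ 2 / h ^ 3 := by
      field_simp
      try ring
      try tauto
    rw [this]
    rw [div_le_iff₀ (by positivity : (0:ℝ) < h ^ 3)]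
    calc A ^ 2 ≤ h * (h * B) := hA2
      _ = 1 / h * B * h ^ 3 := by field_simp
  -- sum the estimate
  have hsum : ∑ i ∈ range (Nmax + 1), (Ua (i + 1) - Ua i) ^ 2 / h
      ≤ (1 / h) * ∫ x in (c 0)..(c (Nmax + 1)), φ x := by
    calc ∑ i ∈ range (Nmax + 1), (Ua (i + 1) - Ua i) ^ 2 / h
        ≤ ∑ i ∈ range (Nmax + 1), (1 / h) * ∫ x in (c i)..(c (i+1)), φ x :=
          Finset.sum_le_sum hkey
      _ = (1 / h) * ∑ i ∈ range (Nmax + 1), ∫ x in (c i)..(c (i+1)), φ x := by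
          rw [Finset.mul_sum]
      _ = (1 / h) * ∫ x in (c 0)..(c (Nmax + 1)), φ x := by
          rw [intervalIntegral.sum_integral_adjacent_intervals
            (fun k _ => hφcont.intervalIntegrable _ _)]
  -- compute the total integral
  have hc0 : c 0 = -h := by simp [hcdef]
  have hcN : c (Nmax + 1) = L := by
    simp only [hcdef]; push_cast; rw [← hNh]; ring
  have htot : (∫ x in (c 0)..(c (Nmax + 1)), φ x) = h * W L := by
    rw [hc0, hcN]
    have hsplit : (∫ x in (-h : ℝ)..L, φ x)
        = (∫ x in (-h:ℝ)..L, W (x + h)) - ∫ x in (-h:ℝ)..L, W x := by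
      exact intervalIntegral.integral_sub
        (hWh.intervalIntegrable _ _)
        (hWcont.intervalIntegrable _ _)
    rw [hsplit, intervalIntegral.integral_comp_add_right (fun x => W x) h]
    have e1 : (-h : ℝ) + h = 0 := by ring
    rw [e1]
    have hLh : L + h = L + h := rfl
    have hsplit2 : (∫ x in (0:ℝ)..(L + h), W x)
        = (∫ x in (0:ℝ)..L, W x) + ∫ x in L..(L+h), W x :=
      (intervalIntegral.integral_add_adjacent_intervals
        (hWcont.intervalIntegrable _ _) (hWcont.intervalIntegrable _ _)).symm
    have hsplit3 : (∫ x in (-h:ℝ)..L, W x)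
        = (∫ x in (-h:ℝ)..(0:ℝ), W x) + ∫ x in (0:ℝ)..L, W x :=
      (intervalIntegral.integral_add_adjacent_intervals
        (hWcont.intervalIntegrable _ _) (hWcont.intervalIntegrable _ _)).symm
    rw [hsplit2, hsplit3]
    have hz1 : (∫ x in (-h:ℝ)..(0:ℝ), W x) = 0 := by
      have heq : Set.EqOn W (fun _ => (0:ℝ)) (Set.uIcc (-h) 0) := by
        intro x hx
        rw [Set.uIcc_of_le (by linarith)] at hx
        exact hWneg x hx.2
      rw [intervalIntegral.integral_congr heq]; simp
    have hz2 : (∫ x in L..(L+h), W x) = h * W L := by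
      have heq : Set.EqOn W (fun _ => W L) (Set.uIcc L (L+h)) := by
        intro x hx
        rw [Set.uIcc_of_le (by linarith)] at hx
        exact hWge x hx.1
      rw [intervalIntegral.integral_congr heq, intervalIntegral.integral_const]
      simp only [smul_eq_mul]; ring
    rw [hz1, hz2]
    ring
  refine le_trans hsum ?_
  rw [htot, ← hWL]
  rw [one_div, inv_mul_cancel_left₀ (ne_of_gt hh0)]
end

section
/- (Discrete Poincaré inequality) Let 0 = x_{1/2} < ... < x_{Nmax+1/2} = L be a mesh with cell widths h_i and let U : {0,...,Nmax+1} → ℝ with U_0 = U_{Nmax+1} = 0. Then ∑_{i=1}^{Nmax} h_i U_i² ≤ L² ∑_{i=0}^{Nmax} (U_{i+1} − U_i)²/h_{i+1/2}, where h_{i+1/2} is the distance between cell centers x_i and x_{i+1} (with x_0 = 0, x_{Nmax+1} = L). -/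
open Finset

/-- Discrete Poincaré inequality for finite volume grid functions with
homogeneous Dirichlet boundary values on a one-dimensional mesh of total length
`L`.  `f i` denotes the face `x_{i+1/2}` (so `f 0 = 0`, `f Nmax = L`), `c i` the
cell centers (with `c 0 = 0`, `c (Nmax+1) = L`), and `U` vanishes at the
boundary indices. -/
theorem discrete_poincare
    (L : ℝ) (hL : 0 < L) (Nmax : ℕ) (hNmax : 1 ≤ Nmax)
    (f : ℕ → ℝ) (hf0 : f 0 = 0) (hfN : f Nmax = L)
    (hmono : ∀ i < Nmax, f i < f (i + 1))
    (c : ℕ → ℝ) (hc0 : c 0 = 0) (hcN : c (Nmax + 1) = L)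
    (hc : ∀ i ∈ Icc 1 Nmax, c i = (f (i - 1) + f i) / 2)
    (U : ℕ → ℝ) (hU0 : U 0 = 0) (hUN : U (Nmax + 1) = 0) :
    ∑ i ∈ Icc 1 Nmax, (f i - f (i - 1)) * (U i) ^ 2 ≤
      L ^ 2 * ∑ i ∈ range (Nmax + 1),
        (U (i + 1) - U i) ^ 2 / (c (i + 1) - c i) := by
  set S := ∑ i ∈ range (Nmax + 1),
      (U (i + 1) - U i) ^ 2 / (c (i + 1) - c i) with hSdef
  -- widths between cell centers are positive
  have hw : ∀ j, j ≤ Nmax → 0 < c (j + 1) - c j := by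
    intro j hj
    rcases Nat.eq_zero_or_pos j with rfl | hj1
    · have h1 := hc 1 (by rw [Finset.mem_Icc]; omega)
      simp only [Nat.sub_self] at h1
      have h2 := hmono 0 (by omega)
      rw [hf0] at h2 h1
      rw [h1, hc0]
      linarith
    · rcases eq_or_lt_of_le hj with heq | hjN
      · rw [heq]
        have hN : c Nmax = (f (Nmax - 1) + f Nmax) / 2 := hc Nmax (by rw [Finset.mem_Icc]; omega)
        have h2 : f (Nmax - 1) < f Nmax := by
          have := hmono (Nmax - 1) (by omega)
          rwa [Nat.sub_add_cancel hNmax] at this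
        rw [hcN, hN, hfN]
        rw [hfN] at h2
        linarith
      · have h1 : c j = (f (j - 1) + f j) / 2 := hc j (by rw [Finset.mem_Icc]; omega)
        have h2 : c (j + 1) = (f j + f (j + 1)) / 2 := by
          have := hc (j + 1) (by rw [Finset.mem_Icc]; omega)
          simpa using this
        have h3 : f (j - 1) < f j := by
          have := hmono (j - 1) (by omega)
          rwa [Nat.sub_add_cancel hj1] at this
        have h4 : f j < f (j + 1) := hmono j hjN
        rw [h1, h2]
        linarith
  have hcsum : ∀ n, ∑ j ∈ range n, (c (j + 1) - c j) = c n - c 0 :=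
    fun n => Finset.sum_range_sub c n
  have hcle : ∀ n, n ≤ Nmax + 1 → c n ≤ L := by
    intro n hn
    have h1 : ∑ j ∈ range n, (c (j + 1) - c j) ≤
        ∑ j ∈ range (Nmax + 1), (c (j + 1) - c j) := by
      apply Finset.sum_le_sum_of_subset_of_nonneg (Finset.range_subset_range.2 hn)
      intro j hj _
      exact le_of_lt (hw j (Nat.lt_succ_iff.mp (Finset.mem_range.mp hj)))
    rw [hcsum, hcsum, hc0, hcN] at h1
    linarith
  have hSnn : ∀ j ∈ range (Nmax + 1),
      0 ≤ (U (j + 1) - U j) ^ 2 / (c (j + 1) - c j) := fun j hj =>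
    div_nonneg (sq_nonneg _) (le_of_lt (hw j (Nat.lt_succ_iff.mp (Finset.mem_range.mp hj))))
  have hS0 : 0 ≤ S := Finset.sum_nonneg hSnn
  -- key pointwise bound via Cauchy–Schwarz
  have key : ∀ i ∈ Icc 1 Nmax, (U i) ^ 2 ≤ L * S := by
    intro i hi
    rw [Finset.mem_Icc] at hi
    have hUi : U i = ∑ j ∈ range i, (U (j + 1) - U j) := by
      rw [Finset.sum_range_sub U i, hU0, sub_zero]
    have hwj : ∀ j ∈ range i, 0 < c (j + 1) - c j := fun j hj =>
      hw j (le_trans (Nat.le_of_lt_succ (Nat.lt_succ_of_lt (Finset.mem_range.mp hj))) hi.2)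
    have cs : (∑ j ∈ range i, (U (j + 1) - U j)) ^ 2 ≤
        (∑ j ∈ range i, (c (j + 1) - c j)) *
        (∑ j ∈ range i, (U (j + 1) - U j) ^ 2 / (c (j + 1) - c j)) := by
      have h := Finset.sum_mul_sq_le_sq_mul_sq (range i)
        (fun j => Real.sqrt (c (j + 1) - c j))
        (fun j => (U (j + 1) - U j) / Real.sqrt (c (j + 1) - c j))
      have e1 : ∑ j ∈ range i, Real.sqrt (c (j + 1) - c j) *
            ((U (j + 1) - U j) / Real.sqrt (c (j + 1) - c j)) =
          ∑ j ∈ range i, (U (j + 1) - U j) := by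
        refine Finset.sum_congr rfl fun j hj => ?_
        have h0 : Real.sqrt (c (j + 1) - c j) ≠ 0 :=
          ne_of_gt (Real.sqrt_pos.mpr (hwj j hj))
        field_simp
      have e2 : ∑ j ∈ range i, Real.sqrt (c (j + 1) - c j) ^ 2 =
          ∑ j ∈ range i, (c (j + 1) - c j) := by
        refine Finset.sum_congr rfl fun j hj => ?_
        exact Real.sq_sqrt (le_of_lt (hwj j hj))
      have e3 : ∑ j ∈ range i, ((U (j + 1) - U j) / Real.sqrt (c (j + 1) - c j)) ^ 2 =
          ∑ j ∈ range i, (U (j + 1) - U j) ^ 2 / (c (j + 1) - c j) := by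
        refine Finset.sum_congr rfl fun j hj => ?_
        rw [div_pow, Real.sq_sqrt (le_of_lt (hwj j hj))]
      rw [e1, e2, e3] at h
      exact h
    have hA : ∑ j ∈ range i, (c (j + 1) - c j) ≤ L := by
      rw [hcsum, hc0, sub_zero]
      exact hcle i (by omega)
    have hB : ∑ j ∈ range i, (U (j + 1) - U j) ^ 2 / (c (j + 1) - c j) ≤ S := by
      apply Finset.sum_le_sum_of_subset_of_nonneg (Finset.range_subset_range.2 (by omega))
      intro j hj _
      exact hSnn j hj
    have hBnn : 0 ≤ ∑ j ∈ range i, (U (j + 1) - U j) ^ 2 / (c (j + 1) - c j) :=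
      Finset.sum_nonneg fun j hj => div_nonneg (sq_nonneg _) (le_of_lt (hwj j hj))
    have hAnn : 0 ≤ ∑ j ∈ range i, (c (j + 1) - c j) :=
      Finset.sum_nonneg fun j hj => le_of_lt (hwj j hj)
    calc (U i) ^ 2 = (∑ j ∈ range i, (U (j + 1) - U j)) ^ 2 := by rw [hUi]
      _ ≤ (∑ j ∈ range i, (c (j + 1) - c j)) *
          (∑ j ∈ range i, (U (j + 1) - U j) ^ 2 / (c (j + 1) - c j)) := cs
      _ ≤ L * S := mul_le_mul hA hB hBnn (le_of_lt hL)
  -- sum of cell widths equals L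
  have hfw : ∑ i ∈ Icc 1 Nmax, (f i - f (i - 1)) = L := by
    rw [show Icc 1 Nmax = Ico 1 (Nmax + 1) from by rw [Finset.Ico_add_one_right_eq_Icc],
      Finset.sum_Ico_eq_sum_range]
    simp only [Nat.add_sub_cancel]
    have : ∀ j ∈ range Nmax, f (1 + j) - f (1 + j - 1) = f (j + 1) - f j := by
      intro j hj
      congr 1 <;> congr 1 <;> omega
    rw [Finset.sum_congr rfl this, Finset.sum_range_sub f Nmax, hf0, hfN, sub_zero]
  have hfpos : ∀ i ∈ Icc 1 Nmax, 0 ≤ f i - f (i - 1) := by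
    intro i hi
    rw [Finset.mem_Icc] at hi
    have := hmono (i - 1) (by omega)
    rw [Nat.sub_add_cancel hi.1] at this
    linarith
  calc ∑ i ∈ Icc 1 Nmax, (f i - f (i - 1)) * (U i) ^ 2
      ≤ ∑ i ∈ Icc 1 Nmax, (f i - f (i - 1)) * (L * S) := by
        refine Finset.sum_le_sum fun i hi => ?_
        exact mul_le_mul_of_nonneg_left (key i hi) (hfpos i hi)
    _ = L ^ 2 * S := by rw [← Finset.sum_mul, hfw]; ring
end
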